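/- For x ≥ 0 and t ≥ 0, define φ_t(x) = ϖ₊ + (x − ϖ₊)·(ϖ₊ − ϖ₋)e^{−λt} / ((ϖ₊ − ϖ₋)e^{−λt} + (x − ϖ₋)(1 − e^{−λt})). Then for every x ≥ 0, t ↦ φ_t(x) is differentiable, φ_0(x) = x, and ∂_t φ_t(x) = 2Aφ_t(x) + R − Sφ_t(x)² for all t ≥ 0. -/

import Mathlib

noncomputable def lam (A R S : ℝ) : ℝ := 2 * Real.sqrt (A ^ 2 + R * S)

noncomputable def wplus (A R S : ℝ) : ℝ := (A + lam A R S / 2) / S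

noncomputable def wminus (A R S : ℝ) : ℝ := (A - lam A R S / 2) / S

/-- The closed-form Riccati semigroup `φ_t(x)`. -/
noncomputable def phi (A R S t x : ℝ) : ℝ :=
  wplus A R S +
    (x - wplus A R S) * ((wplus A R S - wminus A R S) * Real.exp (-(lam A R S) * t)) /
      ((wplus A R S - wminus A R S) * Real.exp (-(lam A R S) * t) +
        (x - wminus A R S) * (1 - Real.exp (-(lam A R S) * t)))

/-- `ϖ = 1 - ϖ₊/ϖ₋`. -/
noncomputable def vpi (A R S : ℝ) : ℝ := 1 - wplus A R S / wminus A R S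

set_option maxHeartbeats 1000000 in
theorem riccati_flow_solves_ode (A R S : ℝ) (hR : 0 < R) (hS : 0 < S)
    (x : ℝ) (hx : 0 ≤ x) :
    phi A R S 0 x = x ∧
      ∀ t : ℝ, 0 ≤ t →
        HasDerivAt (fun s => phi A R S s x)
          (2 * A * phi A R S t x + R - S * (phi A R S t x) ^ 2) t := by
  have hAR : (0:ℝ) < A ^ 2 + R * S := by positivity
  have hsqrt : Real.sqrt (A ^ 2 + R * S) ^ 2 = A ^ 2 + R * S := Real.sq_sqrt hAR.le
  set l := lam A R S with hl_def
  set p := wplus A R S with hp_def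
  set m := wminus A R S with hm_def
  have hlpos : 0 < l := by
    have := Real.sqrt_pos.mpr hAR
    rw [hl_def, lam]; linarith
  have hlS : l = S * (p - m) := by
    rw [hp_def, hm_def, wplus, wminus, ← hl_def]; field_simp; ring
  have hA2 : A = S * (p + m) / 2 := by
    rw [hp_def, hm_def, wplus, wminus, ← hl_def]; field_simp; ring
  have hRpm : R = -(S * p * m) := by
    rw [hp_def, hm_def, wplus, wminus, ← hl_def, hl_def, lam]
    field_simp
    nlinarith [hsqrt]
  have hcpos : 0 < p - m := by
    have : 0 < S * (p - m) := hlS ▸ hlpos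
    nlinarith
  have hmneg : m < 0 := by
    have h1 : A < l / 2 := by
      have h2 : Real.sqrt (A ^ 2) < Real.sqrt (A ^ 2 + R * S) :=
        Real.sqrt_lt_sqrt (sq_nonneg A) (by nlinarith)
      have h3 : A ≤ Real.sqrt (A ^ 2) := by
        rw [Real.sqrt_sq_eq_abs]; exact le_abs_self A
      rw [hl_def, lam]; linarith
    rw [hm_def, wminus, ← hl_def]
    exact div_neg_of_neg_of_pos (by linarith) hS
  set D : ℝ → ℝ := fun s => (p - m) * Real.exp (-l * s) + (x - m) * (1 - Real.exp (-l * s))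
    with hD_def
  have hDpos : ∀ t : ℝ, 0 ≤ t → 0 < D t := by
    intro t ht
    have hDt0 : D t = (p - m) * Real.exp (-l * t) + (x - m) * (1 - Real.exp (-l * t)) := rfl
    rw [hDt0]
    have he1 : Real.exp (-l * t) ≤ 1 := by
      apply Real.exp_le_one_iff.mpr
      nlinarith
    have he0 : 0 < Real.exp (-l * t) := Real.exp_pos _
    have hxm : 0 < x - m := by linarith
    have : 0 < (p - m) * Real.exp (-l * t) := by positivity
    nlinarith
  have hphi : ∀ s : ℝ, phi A R S s x =
      p + (x - p) * ((p - m) * Real.exp (-l * s)) / D s := by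
    intro s; rfl
  constructor
  · rw [hphi 0]
    have hD0 : D 0 = p - m := by simp [hD_def]
    rw [hD0]
    field_simp
    rw [mul_zero, neg_zero, Real.exp_zero]; ring
  · intro t ht
    have hE : HasDerivAt (fun s => Real.exp (-l * s)) (Real.exp (-l * t) * (-l)) t := by
      simpa using ((hasDerivAt_id t).const_mul (-l)).exp
    have hN : HasDerivAt (fun s => (x - p) * ((p - m) * Real.exp (-l * s)))
        ((x - p) * ((p - m) * (Real.exp (-l * t) * (-l)))) t :=
      (hE.const_mul (p - m)).const_mul (x - p)
    have hD' : HasDerivAt D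
        ((p - m) * (Real.exp (-l * t) * (-l)) + (x - m) * (-(Real.exp (-l * t) * (-l)))) t :=
      (hE.const_mul (p - m)).add ((hE.const_sub 1).const_mul (x - m))
    have hDt : D t ≠ 0 := (hDpos t ht).ne'
    have hQ := ((hN.div hD' hDt).const_add p)
    have hfun : (fun s => phi A R S s x) =
        fun s => p + (x - p) * ((p - m) * Real.exp (-l * s)) / D s := funext hphi
    rw [hfun]
    refine hQ.congr_deriv ?_
    rw [hphi t]
    have hDt' : D t = (p - m) * Real.exp (-l * t) + (x - m) * (1 - Real.exp (-l * t)) := rfl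
    rw [hDt'] at hDt ⊢
    set e := Real.exp (-l * t) with he_def
    rw [hA2, hRpm, hlS]
    field_simp
    ring
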